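/- For a non-degenerate real random variable X with everywhere-finite, strictly convex LMGF Λ, the function φ(t) = ∫₀ᵗ Λ(τ)/τ dτ is strictly convex on ℝ. -/

import Mathlib

open MeasureTheory ProbabilityTheory intervalIntegral

private lemma jensen_strict {Ω : Type*} [MeasurableSpace Ω] (μ : Measure Ω)
    [IsProbabilityMeasure μ] (X : Ω → ℝ) (hX : Measurable X)
    (hint : ∀ t : ℝ, Integrable (fun ω => Real.exp (t * X ω)) μ)
    (hnd : ¬ ∃ c : ℝ, X =ᵐ[μ] fun _ => c) {t : ℝ} (ht : t ≠ 0) :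
    t * (∫ ω, X ω ∂μ) < cgf X μ t := by
  have hXint : Integrable X μ := by
    refine ((hint 1).add (hint (-1))).mono hX.aestronglyMeasurable (ae_of_all _ fun ω => ?_)
    have h1 : X ω ≤ Real.exp (X ω) := (Real.add_one_le_exp _).trans' (by linarith)
    have h2 : -X ω ≤ Real.exp (-X ω) := (Real.add_one_le_exp _).trans' (by linarith)
    have e1 := Real.exp_pos (X ω); have e2 := Real.exp_pos (-X ω)
    simp only [Pi.add_apply, Real.norm_eq_abs, one_mul, neg_one_mul]
    rw [abs_of_pos (by positivity : (0:ℝ) < Real.exp (X ω) + Real.exp (-X ω))]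
    rcases abs_cases (X ω) with ⟨h, _⟩ | ⟨h, _⟩ <;> rw [h] <;> linarith
  have htX : Integrable (fun ω => t * X ω) μ := hXint.const_mul t
  have hmain := strictConvexOn_exp.ae_eq_const_or_map_average_lt
    Real.continuous_exp.continuousOn isClosed_univ
    (ae_of_all _ fun ω => Set.mem_univ (t * X ω)) htX (hint t)
  rcases hmain with h | h
  · exfalso
    refine hnd ⟨(⨍ x, t * X x ∂μ) / t, ?_⟩
    filter_upwards [h] with ω hω
    simp only [Function.const_apply] at hω
    field_simp [← hω]
    linarith [hω]
  · have havg : (⨍ x, t * X x ∂μ) = t * ∫ ω, X ω ∂μ := by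
      rw [average_eq_integral, MeasureTheory.integral_const_mul]
    rw [havg, average_eq_integral] at h
    have hmgf : (∫ x, Real.exp (t * X x) ∂μ) = mgf X μ t := rfl
    rw [hmgf] at h
    have := Real.log_lt_log (Real.exp_pos _) h
    rwa [Real.log_exp] at this

theorem phi_strictConvexOn {Ω : Type*} [MeasurableSpace Ω] (μ : Measure Ω)
    [IsProbabilityMeasure μ] (X : Ω → ℝ) (hX : Measurable X)
    (hint : ∀ t : ℝ, Integrable (fun ω => Real.exp (t * X ω)) μ)
    (hnd : ¬ ∃ c : ℝ, X =ᵐ[μ] fun _ => c)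
    (hconv : StrictConvexOn ℝ Set.univ (fun t => cgf X μ t)) :
    StrictConvexOn ℝ Set.univ
      (fun t : ℝ => ∫ τ in (0 : ℝ)..t,
        (if τ = 0 then ∫ ω, X ω ∂μ else cgf X μ τ / τ)) := by
  set f : ℝ → ℝ := fun τ => if τ = 0 then ∫ ω, X ω ∂μ else cgf X μ τ / τ with hf
  -- f is strictly monotone
  have hmono : StrictMono f := by
    intro s t hst
    have key : ∀ u : ℝ, u ≠ 0 → f u = (cgf X μ u - cgf X μ 0) / (u - 0) := by
      intro u hu
      simp [hf, hu, cgf_zero]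
    rcases eq_or_ne s 0 with rfl | hs
    · -- s = 0 < t
      have ht : t ≠ 0 := ne_of_gt hst
      have hj := jensen_strict μ X hX hint hnd ht
      simp only [hf, if_pos rfl, if_neg ht]
      rw [lt_div_iff₀ hst]
      linarith
    rcases eq_or_ne t 0 with rfl | ht
    · -- s < 0
      have hj := jensen_strict μ X hX hint hnd hs
      simp only [hf, if_pos rfl, if_neg hs]
      rw [div_lt_iff_of_neg (lt_of_le_of_ne (le_of_lt hst) hs)]
      linarith
    · rw [key s hs, key t ht]
      exact hconv.secant_strict_mono (Set.mem_univ 0) (Set.mem_univ s)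
        (Set.mem_univ t) hs ht hst
  have hmonoMono : Monotone f := hmono.monotone
  have hII : ∀ a b : ℝ, IntervalIntegrable f volume a b := fun a b =>
    hmonoMono.intervalIntegrable
  refine strictConvexOn_of_slope_strict_mono_adjacent convex_univ ?_
  intro x y z _ _ hxy hyz
  have hsub1 : (∫ τ in (0:ℝ)..y, f τ) - ∫ τ in (0:ℝ)..x, f τ = ∫ τ in x..y, f τ :=
    integral_interval_sub_left (hII 0 y) (hII 0 x)
  have hsub2 : (∫ τ in (0:ℝ)..z, f τ) - ∫ τ in (0:ℝ)..y, f τ = ∫ τ in y..z, f τ :=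
    integral_interval_sub_left (hII 0 z) (hII 0 y)
  rw [hsub1, hsub2]
  set m : ℝ := (x + y) / 2 with hm
  have hxm : x < m := by simp [hm]; linarith
  have hmy : m < y := by simp [hm]; linarith
  -- ∫ x..y f < f y * (y - x)
  have hsplit : (∫ τ in x..y, f τ) = (∫ τ in x..m, f τ) + ∫ τ in m..y, f τ :=
    (integral_add_adjacent_intervals (hII x m) (hII m y)).symm
  have h1 : (∫ τ in x..m, f τ) ≤ f m * (m - x) := by
    have := integral_mono_on hxm.le (hII x m) (_root_.intervalIntegrable_const (c := f m))
      (fun τ hτ => hmonoMono hτ.2)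
    simpa [mul_comm] using this
  have h2 : (∫ τ in m..y, f τ) ≤ f y * (y - m) := by
    have := integral_mono_on hmy.le (hII m y) (_root_.intervalIntegrable_const (c := f y))
      (fun τ hτ => hmonoMono hτ.2)
    simpa [mul_comm] using this
  have hfm : f m < f y := hmono hmy
  have hxy' : (∫ τ in x..y, f τ) < f y * (y - x) := by
    rw [hsplit]
    have : f m * (m - x) < f y * (m - x) :=
      mul_lt_mul_of_pos_right hfm (by linarith)
    nlinarith
  -- ∫ y..z f ≥ f y * (z - y)
  have hyz' : f y * (z - y) ≤ ∫ τ in y..z, f τ := by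
    have := integral_mono_on hyz.le (_root_.intervalIntegrable_const (c := f y)) (hII y z)
      (fun τ hτ => hmonoMono hτ.1)
    simpa [mul_comm] using this
  have hyx : (0:ℝ) < y - x := by linarith
  have hzy : (0:ℝ) < z - y := by linarith
  have l1 : (∫ τ in x..y, f τ) / (y - x) < f y := (div_lt_iff₀ hyx).2 hxy'
  have l2 : f y ≤ (∫ τ in y..z, f τ) / (z - y) := (le_div_iff₀ hzy).2 hyz'
  linarith
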